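/- Define Q₁(τ₁,τ₂) = -(t/2+k/2+q)/(τ₁ - conj(τ₂)) - (t/2-k/2)/(τ₁ - τ₂) - i(t+q)/(2v₁), where v₁ = Im(τ₁). Then for every g = [[a,b],[c,d]] in SL(2,ℝ), Q₁(gτ₁, gτ₂) = (cτ₁+d)²·Q₁(τ₁, τ₂), i.e., Q₁ is covariant of weight 2 in τ₁. -/

import Mathlib

open Complex

/-- The auxiliary function `Q₁`. -/
noncomputable def Q₁ (t k : ℤ) (q : ℂ) (τ₁ τ₂ : ℂ) : ℂ :=
  -(((t : ℂ) / 2 + (k : ℂ) / 2 + q) / (τ₁ - (starRingEnd ℂ) τ₂))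
    - ((t : ℂ) / 2 - (k : ℂ) / 2) / (τ₁ - τ₂)
    - Complex.I * ((t : ℂ) + q) / (2 * (τ₁.im : ℂ))

/-- Denominator of a Möbius transformation is nonzero off the real axis. -/
lemma Q₁aux_denom_ne (a b c d : ℝ) (hdet : a * d - b * c = 1) (τ : ℂ) (hτ : τ.im ≠ 0) :
    (c : ℂ) * τ + d ≠ 0 := by
  intro h
  have him : c * τ.im = 0 := by
    have := congrArg Complex.im h; simpa using this
  have hc : c = 0 := by
    rcases mul_eq_zero.1 him with h' | h'
    · exact h'
    · exact absurd h' hτ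
  have hd : d = 0 := by
    have := congrArg Complex.re h
    simp [hc] at this
    exact_mod_cast this
  rw [hc, hd] at hdet
  simp at hdet

/-- Rewrite `Q₁` without reference to `I` or the imaginary part. -/
lemma Q₁aux_eq (t k : ℤ) (q : ℂ) (τ₁ τ₂ : ℂ) (h : τ₁.im ≠ 0) :
    Q₁ t k q τ₁ τ₂ =
      -(((t : ℂ) / 2 + (k : ℂ) / 2 + q) / (τ₁ - (starRingEnd ℂ) τ₂))
        - ((t : ℂ) / 2 - (k : ℂ) / 2) / (τ₁ - τ₂)
        + ((t : ℂ) + q) / (τ₁ - (starRingEnd ℂ) τ₁) := by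
  unfold Q₁
  have h3 : - (I * ((t : ℂ)+q) / (2 * (τ₁.im : ℂ))) = ((t : ℂ)+q)/(τ₁ - (starRingEnd ℂ) τ₁) := by
    rw [Complex.sub_conj]
    have hv : (τ₁.im : ℂ) ≠ 0 := by exact_mod_cast h
    push_cast
    field_simp
    ring_nf
    simp [Complex.I_sq]
  rw [sub_eq_add_neg _ (I * _ / _), h3]

/-- Imaginary part of a Möbius transformation. -/
lemma Q₁aux_im (a b c d : ℝ) (hdet : a * d - b * c = 1) (τ : ℂ) (hA : (c:ℂ)*τ + d ≠ 0) :
    (((a : ℂ) * τ + b) / ((c : ℂ) * τ + d)).im = τ.im / Complex.normSq ((c:ℂ)*τ + d) := by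
  have hN : Complex.normSq ((c:ℂ)*τ + d) ≠ 0 := by
    simpa [Complex.normSq_eq_zero] using hA
  rw [Complex.div_im]
  simp only [Complex.add_im, Complex.add_re, Complex.mul_im, Complex.mul_re,
    Complex.ofReal_re, Complex.ofReal_im]
  field_simp
  ring_nf
  linear_combination τ.im * hdet

/-- Difference of two Möbius transformations. -/
lemma Q₁aux_diff (a b c d : ℝ) (hdetC : (a:ℂ) * d - b * c = 1) (z w : ℂ)
    (hz : (c:ℂ)*z + d ≠ 0) (hw : (c:ℂ)*w + d ≠ 0) :
    ((a : ℂ) * z + b) / ((c : ℂ) * z + d) - ((a : ℂ) * w + b) / ((c : ℂ) * w + d)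
      = (z - w) / (((c:ℂ)*z + d) * ((c:ℂ)*w + d)) := by
  rw [div_sub_div _ _ hz hw]
  congr 1
  linear_combination (z - w) * hdetC

/-- weight-2 covariance of `Q₁` in the first variable under the
diagonal Möbius action of `SL(2,ℝ)`. -/
theorem Q₁_weight_two_covariance
    (t k : ℤ) (q : ℂ) (a b c d : ℝ) (hdet : a * d - b * c = 1)
    (τ₁ τ₂ : ℂ) (h₁ : 0 < τ₁.im) (h₂ : 0 < τ₂.im) (hne : τ₁ ≠ τ₂) :
    Q₁ t k q (((a : ℂ) * τ₁ + b) / ((c : ℂ) * τ₁ + d))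
             (((a : ℂ) * τ₂ + b) / ((c : ℂ) * τ₂ + d))
      = ((c : ℂ) * τ₁ + d) ^ 2 * Q₁ t k q τ₁ τ₂ := by
  have hdetC : (a:ℂ) * d - b * c = 1 := by exact_mod_cast hdet
  have him1 : τ₁.im ≠ 0 := ne_of_gt h₁
  have him2 : τ₂.im ≠ 0 := ne_of_gt h₂
  have hA : (c:ℂ)*τ₁ + d ≠ 0 := Q₁aux_denom_ne a b c d hdet τ₁ him1
  have hB : (c:ℂ)*τ₂ + d ≠ 0 := Q₁aux_denom_ne a b c d hdet τ₂ him2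
  have hA' : (c:ℂ)*(starRingEnd ℂ) τ₁ + d ≠ 0 :=
    Q₁aux_denom_ne a b c d hdet _ (by simpa using him1)
  have hB' : (c:ℂ)*(starRingEnd ℂ) τ₂ + d ≠ 0 :=
    Q₁aux_denom_ne a b c d hdet _ (by simpa using him2)
  have hN : Complex.normSq ((c:ℂ)*τ₁ + d) ≠ 0 := by
    simpa [Complex.normSq_eq_zero] using hA
  have hGim : (((a : ℂ) * τ₁ + b) / ((c : ℂ) * τ₁ + d)).im ≠ 0 := by
    rw [Q₁aux_im a b c d hdet τ₁ hA]
    exact div_ne_zero him1 hN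
  -- nonvanishing of the three relevant differences
  have hw1 : τ₁ - (starRingEnd ℂ) τ₂ ≠ 0 := by
    intro h
    have := congrArg Complex.im h
    simp at this
    linarith
  have hu : τ₁ - τ₂ ≠ 0 := sub_ne_zero.2 hne
  have hs1 : τ₁ - (starRingEnd ℂ) τ₁ ≠ 0 := by
    intro h
    have := congrArg Complex.im h
    simp at this
    linarith
  rw [Q₁aux_eq t k q _ _ hGim, Q₁aux_eq t k q _ _ him1]
  rw [show (starRingEnd ℂ) (((a : ℂ) * τ₂ + b) / ((c : ℂ) * τ₂ + d))
      = ((a : ℂ) * (starRingEnd ℂ) τ₂ + b) / ((c : ℂ) * (starRingEnd ℂ) τ₂ + d) by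
        simp [map_div₀]]
  rw [show (starRingEnd ℂ) (((a : ℂ) * τ₁ + b) / ((c : ℂ) * τ₁ + d))
      = ((a : ℂ) * (starRingEnd ℂ) τ₁ + b) / ((c : ℂ) * (starRingEnd ℂ) τ₁ + d) by
        simp [map_div₀]]
  rw [Q₁aux_diff a b c d hdetC τ₁ ((starRingEnd ℂ) τ₂) hA hB',
      Q₁aux_diff a b c d hdetC τ₁ τ₂ hA hB,
      Q₁aux_diff a b c d hdetC τ₁ ((starRingEnd ℂ) τ₁) hA hA']
  field_simp
  ring
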